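/- Let M be a k×k integer matrix and φ : ℤ^k → ℤ^k the endomorphism v ↦ M·v. If det(I − M) ≠ 0 then R(φ) = |det(I − M)|. -/

import Mathlib

private lemma index_range_eq_natAbs_det {ι : Type*} [Fintype ι] [DecidableEq ι]
    (f : (ι → ℤ) →ₗ[ℤ] (ι → ℤ)) (hf : Function.Injective f) :
    (LinearMap.range f).toAddSubgroup.index = (LinearMap.det f).natAbs := by
  classical
  set N := LinearMap.range f with hN
  obtain ⟨n, snf⟩ := N.smithNormalForm (Pi.basisFun ℤ ι)
  have hidx : N.toAddSubgroup.index ≠ 0 := by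
    rw [Int.submodule_toAddSubgroup_index_ne_zero_iff]
    exact ⟨(LinearEquiv.ofInjective f hf).symm⟩
  have hn : n = Fintype.card ι := snf.toAddSubgroup_index_ne_zero_iff.mp hidx
  have hcard : Fintype.card (Fin n) = Fintype.card ι := by simp [hn]
  have hbij : Function.Bijective snf.f :=
    (Fintype.bijective_iff_injective_and_card snf.f).mpr ⟨snf.f.injective, hcard⟩
  let e0 : Fin n ≃ ι := Equiv.ofBijective snf.f hbij
  let a' : ι → ℤ := fun i => snf.a (e0.symm i)
  let bN' : Module.Basis ι ℤ N := snf.bN.reindex e0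
  have hbN' : ∀ i, (bN' i : ι → ℤ) = a' i • snf.bM i := by
    intro i
    have h1 : (bN' i : ι → ℤ) = (snf.bN (e0.symm i) : ι → ℤ) := by
      simp [bN', Module.Basis.reindex_apply]
    rw [h1, snf.snf]
    congr 2
    exact e0.apply_symm_apply i
  let g : (ι → ℤ) →ₗ[ℤ] (ι → ℤ) :=
    N.subtype ∘ₗ (snf.bM.equiv bN' (Equiv.refl ι)).toLinearMap
  have hgapp : ∀ j, g (snf.bM j) = a' j • snf.bM j := by
    intro j
    have : g (snf.bM j) = (bN' j : ι → ℤ) := by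
      simp [g, Module.Basis.equiv_apply]
    rw [this, hbN' j]
  have hg : LinearMap.toMatrix snf.bM snf.bM g = Matrix.diagonal a' := by
    ext i j
    rw [LinearMap.toMatrix_apply, hgapp j, map_smul, Module.Basis.repr_self]
    by_cases hij : i = j
    · subst hij; simp
    · simp [Matrix.diagonal, Finsupp.single_apply, hij, Ne.symm hij]
  have hdetg : LinearMap.det g = ∏ i, a' i := by
    rw [← LinearMap.det_toMatrix snf.bM, hg, Matrix.det_diagonal]
  -- natAbs det f = natAbs det g
  let ef : (ι → ℤ) ≃ₗ[ℤ] N := LinearEquiv.ofInjective f hf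
  let eg : (ι → ℤ) ≃ₗ[ℤ] N := snf.bM.equiv bN' (Equiv.refl ι)
  let u : (ι → ℤ) ≃ₗ[ℤ] (ι → ℤ) := eg.trans ef.symm
  have hfu : f ∘ₗ (u : (ι → ℤ) →ₗ[ℤ] (ι → ℤ)) = g := by
    apply LinearMap.ext
    intro x
    show f (ef.symm (eg x)) = g x
    have h1 : ∀ y : N, f (ef.symm y) = (y : ι → ℤ) := by
      intro y
      have : ef (ef.symm y) = y := ef.apply_symm_apply y
      calc f (ef.symm y) = (ef (ef.symm y) : ι → ℤ) :=
            (LinearEquiv.ofInjective_apply f (ef.symm y)).symm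
        _ = (y : ι → ℤ) := by rw [this]
    rw [h1 (eg x)]
    rfl
  have hdet_eq : (LinearMap.det f).natAbs = (LinearMap.det g).natAbs := by
    have := congrArg LinearMap.det hfu
    rw [LinearMap.det_comp] at this
    have hu : (LinearMap.det (u : (ι → ℤ) →ₗ[ℤ] (ι → ℤ))).natAbs = 1 := by
      have := LinearEquiv.isUnit_det' u
      rcases Int.isUnit_iff.mp this with h | h <;> rw [h] <;> rfl
    rw [← this, Int.natAbs_mul, hu, mul_one]
  -- index computation
  have hsub : Fintype.card ι - n = 0 := by omega
  rw [snf.toAddSubgroup_index_eq_pow_mul_prod, hsub, pow_zero, one_mul]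
  have hspan : ∀ i : Fin n, (Ideal.span {snf.a i}).toAddSubgroup.index = (snf.a i).natAbs := by
    intro i
    rw [Ideal.span_singleton_toAddSubgroup_eq_zmultiples, Int.index_zmultiples]
  rw [hdet_eq, hdetg]
  rw [show (∏ i : ι, a' i).natAbs = ∏ i : ι, (a' i).natAbs from map_prod Int.natAbsHom a' Finset.univ]
  calc ∏ i : Fin n, (Ideal.span {snf.a i}).toAddSubgroup.index
      = ∏ i : Fin n, (snf.a i).natAbs := by simp [hspan]
    _ = ∏ i : ι, (a' i).natAbs := (Equiv.prod_comp e0.symm fun j => (snf.a j).natAbs).symm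



/-- Two elements `a`, `b` of a group are `φ`-conjugate if `b = γ * a * (φ γ)⁻¹` for some `γ`. -/
def phiConj {G : Type*} [Group G] (φ : G → G) (a b : G) : Prop :=
  ∃ γ : G, b = γ * a * (φ γ)⁻¹

/-- The Reidemeister number of `φ`: the number of `φ`-conjugacy classes
(`0` if there are infinitely many). -/
noncomputable def reidemeisterNumber {G : Type*} [Group G] (φ : G → G) : ℕ :=
  Nat.card (Quot (phiConj φ))


/-- for the endomorphism `v ↦ M·v` of `ℤ^k` with `det(I - M) ≠ 0`,
`R(φ) = |det(I - M)|`.  (The free abelian group `ℤ^k` is written multiplicatively as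
`Multiplicative (Fin k → ℤ)`.) -/
theorem stmt4 (k : ℕ) (M : Matrix (Fin k) (Fin k) ℤ)
    (φ : Multiplicative (Fin k → ℤ) →* Multiplicative (Fin k → ℤ))
    (hφ : ∀ v : Fin k → ℤ, φ (Multiplicative.ofAdd v) = Multiplicative.ofAdd (M.mulVec v))
    (hdet : (1 - M).det ≠ 0) :
    reidemeisterNumber ⇑φ = (1 - M).det.natAbs := by
  classical
  set A : Matrix (Fin k) (Fin k) ℤ := 1 - M with hA
  set H : AddSubgroup (Fin k → ℤ) := (LinearMap.range A.mulVecLin).toAddSubgroup with hH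
  have hφγ : ∀ γ : Multiplicative (Fin k → ℤ), (φ γ).toAdd = M.mulVec γ.toAdd := by
    intro γ
    have := hφ γ.toAdd
    simpa using congrArg Multiplicative.toAdd this
  have hrel : ∀ a b : Multiplicative (Fin k → ℤ),
      phiConj ⇑φ a b ↔ -a.toAdd + b.toAdd ∈ H := by
    intro a b
    constructor
    · rintro ⟨γ, rfl⟩
      refine ⟨γ.toAdd, ?_⟩
      show A.mulVec γ.toAdd = _
      rw [hA, Matrix.sub_mulVec, Matrix.one_mulVec]
      have : (γ * a * (φ γ)⁻¹).toAdd = γ.toAdd + a.toAdd - M.mulVec γ.toAdd := by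
        rw [toAdd_mul, toAdd_mul, toAdd_inv, hφγ]
        abel
      rw [this]
      abel
    · rintro ⟨v, hv⟩
      refine ⟨Multiplicative.ofAdd v, ?_⟩
      apply Multiplicative.toAdd.injective
      rw [toAdd_mul, toAdd_mul, toAdd_inv, hφγ]
      have hv' : A.mulVec v = -a.toAdd + b.toAdd := hv
      rw [hA, Matrix.sub_mulVec, Matrix.one_mulVec] at hv'
      simp only [toAdd_ofAdd]
      have : b.toAdd = a.toAdd + (v - M.mulVec v) := by rw [hv']; abel_nf
      rw [this]
      abel
  have e : Quot (phiConj ⇑φ) ≃ ((Fin k → ℤ) ⧸ H) :=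
    Quot.congr (Equiv.refl _)
      (fun a b => by
        rw [hrel a b]
        exact (QuotientAddGroup.leftRel_apply).symm)
  have hinj : Function.Injective A.mulVecLin := by
    rw [← LinearMap.ker_eq_bot]
    rw [Submodule.eq_bot_iff]
    intro v hv
    have hv' : A.mulVec v = 0 := hv
    have h2 : A.det • v = 0 := by
      have h3 := congrArg (A.adjugate.mulVec) hv'
      rw [Matrix.mulVec_mulVec, Matrix.adjugate_mul] at h3
      simpa [Matrix.smul_mulVec, Matrix.one_mulVec] using h3
    exact (smul_eq_zero.mp h2).resolve_left hdet
  have hdetA : LinearMap.det A.mulVecLin = A.det := by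
    rw [← Matrix.toLin'_apply', LinearMap.det_toLin']
  calc reidemeisterNumber ⇑φ = Nat.card ((Fin k → ℤ) ⧸ H) := Nat.card_congr e
    _ = H.index := rfl
    _ = (LinearMap.det A.mulVecLin).natAbs := index_range_eq_natAbs_det _ hinj
    _ = (1 - M).det.natAbs := by rw [hdetA]
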